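/- arXiv:2005.09125 — 2 statements merged into one kernel-verified Lean document; each statement's English description precedes it below -/
import Mathlib

section
/- For an FANBW A and word w with co-deterministic run DAG G^e_{w,A}, define the sequence of DAGs G⁰ = G^e_{w,A}, G^{2i+1} = G^{2i} minus its finite vertices, and G^{2i+2} = G^{2i+1} minus its F-free vertices. Then w ∉ L(A) if and only if G³ is empty; hence the maximum rank in the induced ranking of G^e_{w,A} is at most 2. -/
open Classical

variable {Q : Type} {A : Type}

/-- A nondeterministic Büchi automaton on words (NBW). -/
structure NBW (Q : Type) (A : Type) where
  I : Set Q
  δ : Q → A → Set Q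
  F : Set Q

namespace NBW

/-- Transition function extended to sets of states. -/
def δset (M : NBW Q A) (S : Set Q) (a : A) : Set Q := ⋃ q ∈ S, M.δ q a

/-- A run of `M` on the word `w`. -/
def IsRun (M : NBW Q A) (w : ℕ → A) (ρ : ℕ → Q) : Prop :=
  ρ 0 ∈ M.I ∧ ∀ i, ρ (i + 1) ∈ M.δ (ρ i) (w i)

/-- An accepting run: a run visiting accepting states infinitely often. -/
def IsAccRun (M : NBW Q A) (w : ℕ → A) (ρ : ℕ → Q) : Prop :=
  M.IsRun w ρ ∧ ∀ n, ∃ m ≥ n, ρ m ∈ M.F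

/-- `M` accepts the word `w`. -/
def Accepts (M : NBW Q A) (w : ℕ → A) : Prop := ∃ ρ, M.IsAccRun w ρ

/-- `M` is finitely ambiguous (an FANBW): each word has finitely many accepting runs. -/
def FA (M : NBW Q A) : Prop := ∀ w : ℕ → A, {ρ | M.IsAccRun w ρ}.Finite

/-- Completeness of the transition function. -/
def Complete (M : NBW Q A) : Prop := ∀ (q : Q) (a : A), (M.δ q a).Nonempty

/-- Reverse determinism: each state has at most one `a`-predecessor. -/
def ReverseDet (M : NBW Q A) : Prop :=
  ∀ (q' : Q) (a : A), {q | q' ∈ M.δ q a}.Subsingleton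

/-- The set of states at level `l` of the run DAG `G_{w,M}`. -/
def V (M : NBW Q A) (w : ℕ → A) : ℕ → Set Q
  | 0 => M.I
  | l + 1 => M.δset (V M w l) (w l)

/-- Edge of the run DAG `G_{w,M}` from `⟨q,l⟩` to `⟨q',l+1⟩`. -/
def Edge (M : NBW Q A) (w : ℕ → A) (l : ℕ) (q q' : Q) : Prop :=
  q ∈ M.V w l ∧ q' ∈ M.δ q (w l)

/-- An ω-branch of the run DAG `G_{w,M}` (identified with its sequence of states). -/
def IsBranch (M : NBW Q A) (w : ℕ → A) (b : ℕ → Q) : Prop :=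
  b 0 ∈ M.I ∧ ∀ l, M.Edge w l (b l) (b (l + 1))

/-- Edge of the co-deterministic run DAG `G^e_{w,M}`: only the edge from the
minimal-index predecessor (w.r.t. the linear order enumerating `Q`) is kept. -/
def EdgeE [LinearOrder Q] (M : NBW Q A) (w : ℕ → A) (l : ℕ) (q q' : Q) : Prop :=
  IsLeast {p | p ∈ M.V w l ∧ q' ∈ M.δ p (w l)} q

/-- An ω-branch of the co-deterministic run DAG `G^e_{w,M}`. -/
def IsBranchE [LinearOrder Q] (M : NBW Q A) (w : ℕ → A) (b : ℕ → Q) : Prop :=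
  b 0 ∈ M.I ∧ ∀ l, M.EdgeE w l (b l) (b (l + 1))

/-- A branch of `G^e_{w,M}` starting from vertex `⟨q,l⟩`. -/
def BranchFromE [LinearOrder Q] (M : NBW Q A) (w : ℕ → A) (l : ℕ) (q : Q) (b : ℕ → Q) : Prop :=
  b 0 = q ∧ q ∈ M.V w l ∧ ∀ i, M.EdgeE w (l + i) (b i) (b (i + 1))

/-- The vertex `⟨q,l⟩` of `G^e_{w,M}` is finite: no infinite branch starts from it. -/
def FiniteVertexE [LinearOrder Q] (M : NBW Q A) (w : ℕ → A) (l : ℕ) (q : Q) : Prop :=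
  ¬ ∃ b, M.BranchFromE w l q b

/-- The minimal set of predecessors `S_min` of `δ(S,b)` within `S`. -/
def Smin [LinearOrder Q] (M : NBW Q A) (S : Set Q) (b : A) : Set Q :=
  {q | ∃ q' ∈ M.δset S b, IsLeast {p | p ∈ S ∧ q' ∈ M.δ p b} q}

/-- The reduced transition function `δ^e` for the level with state set `S` and letter `b`. -/
def δe [LinearOrder Q] (M : NBW Q A) (S : Set Q) (b : A) (S₁ : Set Q) : Set Q :=
  M.δset (S₁ ∩ M.Smin S b) b

/-- The reduced transition function at level `ℓ` of `G^e_{w,M}`. -/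
def δeAt [LinearOrder Q] (M : NBW Q A) (w : ℕ → A) (ℓ : ℕ) (S₁ : Set Q) : Set Q :=
  M.δe (M.V w ℓ) (w ℓ) S₁

end NBW

section DAG

variable (E : ℕ → Q → Q → Prop) (U : Set (Q × ℕ))

/-- An infinite branch from vertex `v` staying inside the vertex set `U`,
following the edge relation `E`. -/
def DagBranchIn (v : Q × ℕ) (b : ℕ → Q) : Prop :=
  b 0 = v.1 ∧ (∀ i, (b i, v.2 + i) ∈ U) ∧ ∀ i, E (v.2 + i) (b i) (b (i + 1))

/-- Vertex `v` is finite in the sub-DAG `U`: no infinite branch from `v` inside `U`. -/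
def DagFiniteIn (v : Q × ℕ) : Prop := ¬ ∃ b, DagBranchIn E U v b

/-- One-step reachability inside `U`. -/
def DagStep (v v' : Q × ℕ) : Prop :=
  v ∈ U ∧ v' ∈ U ∧ v'.2 = v.2 + 1 ∧ E v.2 v.1 v'.1

/-- Vertex `v` is F-free in `U`: not finite, and no F-vertex reachable from it in `U`. -/
def DagFFreeIn (F : Set Q) (v : Q × ℕ) : Prop :=
  ¬ DagFiniteIn E U v ∧ ∀ v', Relation.ReflTransGen (DagStep E U) v v' → v'.1 ∉ F

/-- The rank-stripping sequence of sub-DAGs: `G⁰ = G0`; `G^{2i+1}` removes the finite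
vertices of `G^{2i}`; `G^{2i+2}` removes the F-free vertices of `G^{2i+1}`. -/
def DagStrip (F : Set Q) (G0 : Set (Q × ℕ)) : ℕ → Set (Q × ℕ)
  | 0 => G0
  | i + 1 =>
      let U' := DagStrip F G0 i
      if i % 2 = 0 then U' \ {v | DagFiniteIn E U' v}
      else U' \ {v | DagFFreeIn E U' F v}

end DAG

namespace NBW

/-- The vertex set of the run DAG `G_{w,M}` (also of `G^e_{w,M}`). -/
def DagVertices (M : NBW Q A) (w : ℕ → A) : Set (Q × ℕ) := {v | v.1 ∈ M.V w v.2}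

/-- Level rankings with maximum rank 2: `none` plays the role of `⊥`. -/
def IsLR (M : NBW Q A) (f : Q → Option (Fin 3)) : Prop :=
  ∀ q r, f q = some r → q ∈ M.F → (r : ℕ) % 2 = 0

/-- Domain of a level ranking. -/
def rankDom (f : Q → Option (Fin 3)) : Set Q := {q | (f q).isSome}

/-- Coverage relation `f' ⪯^{δ^e}_a f` for level rankings. -/
def Covers [LinearOrder Q] (M : NBW Q A) (a : A) (f f' : Q → Option (Fin 3)) : Prop :=
  (∀ q r q', f q = some r → q' ∈ M.δe (rankDom f) a {q} →
    ∃ r', f' q' = some r' ∧ r' ≤ r) ∧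
  (∀ q', (∀ q, q' ∈ M.δe (rankDom f) a {q} → f q = none) → f' q' = none)

/-- The rank-based complement of an FANBW, with maximum rank 2 and the reduced
transition function `δ^e`. -/
noncomputable def rankComplement [LinearOrder Q] (M : NBW Q A) :
    NBW ((Q → Option (Fin 3)) × Set Q) A where
  I := {s | s.2 = ∅ ∧ ∀ q, s.1 q = if q ∈ M.I then some 2 else none}
  δ := fun s a =>
    {s' | M.Covers a s.1 s'.1 ∧ M.IsLR s'.1 ∧
      ((s.2 ≠ ∅ ∧
          s'.2 = M.δe (rankDom s.1) a s.2 \ {q | ∃ r, s'.1 q = some r ∧ (r : ℕ) % 2 = 1}) ∨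
       (s.2 = ∅ ∧ s'.2 = {q | ∃ r, s'.1 q = some r ∧ (r : ℕ) % 2 = 0}))}
  F := {s | s.2 = ∅}

/-- Slice-based DAG `G^s_{w,M}`: the set at position `p` of level `l`.
Level `0` consists of `I \ F` (position 0) and `I ∩ F` (position 1); from the
set at position `j` of level `l`, position `2j` of level `l+1` holds the non-`F`
successors and position `2j+1` the `F`-successors, keeping only the rightmost
occurrence of each state. -/
noncomputable def sliceSet (M : NBW Q A) (w : ℕ → A) : ℕ → ℕ → Set Q
  | 0, p => if p = 0 then M.I \ M.F else if p = 1 then M.I ∩ M.F else ∅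
  | l + 1, p =>
      let S' : ℕ → Set Q := fun q =>
        if q % 2 = 0 then M.δset (sliceSet M w l (q / 2)) (w l) \ M.F
        else M.δset (sliceSet M w l (q / 2)) (w l) ∩ M.F
      S' p \ ⋃ q ∈ Set.Ioi p, S' q

/-- An ω-branch of the slice-based DAG `G^s_{w,M}`, given by the positions it visits. -/
def IsSliceBranch (M : NBW Q A) (w : ℕ → A) (g : ℕ → ℕ) : Prop :=
  (∀ l, M.sliceSet w l (g l) ≠ ∅) ∧ ∀ l, g (l + 1) / 2 = g l

/-- There is an infinite branch of `G^s_{w,M}` starting from position `p` of level `l`. -/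
def SliceBranchFrom (M : NBW Q A) (w : ℕ → A) (l p : ℕ) : Prop :=
  ∃ g : ℕ → ℕ, g 0 = p ∧ (∀ i, M.sliceSet w (l + i) (g i) ≠ ∅) ∧ ∀ i, g (i + 1) / 2 = g i

/-- Accepting-phase transition of the `(N,C,B)` construction. -/
noncomputable def ncbStep [LinearOrder Q] (M : NBW Q A) (a : A)
    (t : Set Q × Set Q × Set Q) : Set Q × Set Q × Set Q :=
  (M.δe t.1 a t.1,
   M.δe t.1 a t.2.1 ∪ (M.δe t.1 a t.1 ∩ M.F),
   if t.2.2 = ∅ then M.δe t.1 a t.2.1 ∪ (M.δe t.1 a t.1 ∩ M.F) else M.δe t.1 a t.2.2)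

/-- The slice-based specialized complement of an FANBW: the `(N,C,B)` construction. -/
noncomputable def ncbComplement [LinearOrder Q] (M : NBW Q A) :
    NBW (Set Q ⊕ Set Q × Set Q × Set Q) A where
  I := {Sum.inl M.I}
  δ := fun s a =>
    match s with
    | Sum.inl S => {Sum.inl (M.δe S a S), Sum.inr (M.ncbStep a (S, S ∩ M.F, S ∩ M.F))}
    | Sum.inr t => {Sum.inr (M.ncbStep a t)}
  F := {s | ∃ t : Set Q × Set Q × Set Q, s = Sum.inr t ∧ t.2.2 = ∅}

/-- Trajectory of the deterministic accepting phase of the `(N,C,B)` construction. -/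
noncomputable def ncbTraj [LinearOrder Q] (M : NBW Q A) (w : ℕ → A)
    (t₀ : Set Q × Set Q × Set Q) : ℕ → Set Q × Set Q × Set Q
  | 0 => t₀
  | i + 1 => M.ncbStep (w i) (ncbTraj M w t₀ i)

end NBW

/-! ### Auxiliary development for the max-rank-two theorem -/

set_option linter.unusedSectionVars false

section MaxRankAux

variable [Fintype Q] [LinearOrder Q] (M : NBW Q A) (w : ℕ → A)

/-- Unfolding of the strip at level 1. -/
lemma strip1 (E : ℕ → Q → Q → Prop) (F : Set Q) (G0 : Set (Q × ℕ)) :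
    DagStrip E F G0 1 = G0 \ {v | DagFiniteIn E G0 v} := by
  simp [DagStrip]

lemma strip2 (E : ℕ → Q → Q → Prop) (F : Set Q) (G0 : Set (Q × ℕ)) :
    DagStrip E F G0 2 =
      DagStrip E F G0 1 \ {v | DagFFreeIn E (DagStrip E F G0 1) F v} := by
  show DagStrip E F G0 (1 + 1) = _
  rw [DagStrip]
  norm_num

lemma strip3 (E : ℕ → Q → Q → Prop) (F : Set Q) (G0 : Set (Q × ℕ)) :
    DagStrip E F G0 3 =
      DagStrip E F G0 2 \ {v | DagFiniteIn E (DagStrip E F G0 2) v} := by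
  show DagStrip E F G0 (2 + 1) = _
  rw [DagStrip]
  norm_num

lemma edgeE_target {l : ℕ} {p q' : Q} (h : M.EdgeE w l p q') : q' ∈ M.V w (l + 1) := by
  obtain ⟨⟨hp, hq⟩, -⟩ := h
  exact Set.mem_biUnion hp hq

lemma exists_pred {l : ℕ} {q' : Q} (h : q' ∈ M.V w (l + 1)) : ∃ p, M.EdgeE w l p q' := by
  have h' : ∃ q ∈ M.V w l, q' ∈ M.δ q (w l) := by
    simpa [NBW.V, NBW.δset] using h
  have hT : {p | p ∈ M.V w l ∧ q' ∈ M.δ p (w l)}.Nonempty := by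
    obtain ⟨q, hq, hd⟩ := h'
    exact ⟨q, hq, hd⟩
  obtain ⟨a, haT, hmin⟩ := Set.exists_min_image _ id (Set.toFinite _) hT
  exact ⟨a, haT, fun b hb => hmin b hb⟩

lemma edgeE_unique {l : ℕ} {p p' q' : Q} (h : M.EdgeE w l p q') (h' : M.EdgeE w l p' q') :
    p = p' :=
  h.unique h'

/-- Every vertex of the run DAG has a backward path (in `G^e`) to level 0. -/
lemma exists_back_path :
    ∀ (l : ℕ) (q : Q), q ∈ M.V w l →
      ∃ σ : ℕ → Q, σ l = q ∧ σ 0 ∈ M.I ∧ ∀ m < l, M.EdgeE w m (σ m) (σ (m + 1)) := by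
  intro l
  induction l with
  | zero =>
    intro q hq
    exact ⟨fun _ => q, rfl, hq, fun m hm => absurd hm (Nat.not_lt_zero m)⟩
  | succ l ih =>
    intro q hq
    obtain ⟨p, hp⟩ := exists_pred M w hq
    obtain ⟨σ, hσl, hσ0, hσe⟩ := ih p hp.1.1
    refine ⟨Function.update σ (l + 1) q, ?_, ?_, ?_⟩
    · simp
    · rwa [Function.update_of_ne (by omega)]
    · intro m hm
      rcases Nat.lt_succ_iff_lt_or_eq.mp hm with hml | hml
      · rw [Function.update_of_ne (by omega), Function.update_of_ne (by omega)]
        exact hσe m hml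
      · subst hml
        rw [Function.update_of_ne (by omega), Function.update_self, hσl]
        exact hp

lemma infinite_exists_ge {s : Set ℕ} (hs : s.Infinite) (k : ℕ) : ∃ n ∈ s, k ≤ n := by
  by_contra h
  push_neg at h
  exact hs ((Set.finite_Iio k).subset fun n hn => h n hn)

lemma exists_infinite_fiber' {α : Type*} {S : Set ℕ} (hS : S.Infinite) (f : ℕ → α)
    {T : Set α} (hT : T.Finite) (hf : ∀ n ∈ S, f n ∈ T) :
    ∃ a, {n ∈ S | f n = a}.Infinite := by
  by_contra h
  push_neg at h
  refine hS (Set.Finite.subset (hT.biUnion fun a _ => h a) ?_)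
  exact fun n hn => Set.mem_biUnion (hf n hn) ⟨hn, rfl⟩

/-- One refinement step of the König construction: shrink the infinite index set so that
all members agree on the value of `f`. -/
noncomputable def konigRefine (S : {s : Set ℕ // s.Infinite}) (f : ℕ → Q) :
    {s : Set ℕ // s.Infinite} :=
  ⟨{n ∈ S.1 | f n = (exists_infinite_fiber' S.2 f Set.finite_univ
      (fun _ _ => Set.mem_univ _)).choose},
    (exists_infinite_fiber' S.2 f Set.finite_univ (fun _ _ => Set.mem_univ _)).choose_spec⟩

lemma konigRefine_subset (S : {s : Set ℕ // s.Infinite}) (f : ℕ → Q) :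
    (konigRefine S f).1 ⊆ S.1 := fun _ hn => hn.1

lemma konigRefine_agree (S : {s : Set ℕ // s.Infinite}) (f : ℕ → Q)
    {n n' : ℕ} (hn : n ∈ (konigRefine S f).1) (hn' : n' ∈ (konigRefine S f).1) :
    f n = f n' := hn.2.trans hn'.2.symm

/-- The König sequence of infinite index sets for a family of runs `σ`. -/
noncomputable def konig (σ : ℕ → ℕ → Q) : ℕ → {s : Set ℕ // s.Infinite}
  | 0 => konigRefine ⟨Set.univ, Set.infinite_univ⟩ (fun n => σ n 0)
  | l + 1 => konigRefine (konig σ l) (fun n => σ n (l + 1))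

lemma konig_subset (σ : ℕ → ℕ → Q) (l : ℕ) : (konig σ (l + 1)).1 ⊆ (konig σ l).1 :=
  konigRefine_subset _ _

lemma konig_mono (σ : ℕ → ℕ → Q) {l l' : ℕ} (h : l ≤ l') :
    (konig σ l').1 ⊆ (konig σ l).1 := by
  induction l' with
  | zero => simpa [Nat.le_zero.mp h] using Set.Subset.rfl
  | succ l' ih =>
    rcases Nat.le_succ_iff_eq_or_le.mp h with rfl | h'
    · exact Set.Subset.rfl
    · exact (konig_subset σ l').trans (ih h')

lemma konig_agree (σ : ℕ → ℕ → Q) (l : ℕ) {n n' : ℕ}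
    (hn : n ∈ (konig σ l).1) (hn' : n' ∈ (konig σ l).1) : σ n l = σ n' l := by
  cases l with
  | zero => exact konigRefine_agree _ _ hn hn'
  | succ l => exact konigRefine_agree _ _ hn hn'

/-- The limit branch of the König construction. -/
noncomputable def konigLimit (σ : ℕ → ℕ → Q) : ℕ → Q :=
  fun l => σ ((konig σ l).2.nonempty.some) l

lemma konigLimit_eq (σ : ℕ → ℕ → Q) {l m n : ℕ} (hml : m ≤ l) (hn : n ∈ (konig σ l).1) :
    σ n m = konigLimit σ m :=
  konig_agree σ m (konig_mono σ hml hn) (konig σ m).2.nonempty.some_mem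

/-- If `w` is accepted by a finitely ambiguous `M`, then the co-deterministic DAG `G^e`
has a full accepting branch. -/
lemma acc_branchE_of_accepts (hFA : M.FA) (hacc : M.Accepts w) :
    ∃ β : ℕ → Q, (∀ l, M.EdgeE w l (β l) (β (l + 1))) ∧ ∀ k, ∃ m ≥ k, β m ∈ M.F := by
  obtain ⟨ρ, hρrun, hρacc⟩ := hacc
  have hρV : ∀ n, ρ n ∈ M.V w n := by
    intro n
    induction n with
    | zero => exact hρrun.1
    | succ n ih => exact Set.mem_biUnion ih (hρrun.2 n)
  -- the backward path of each `(ρ n, n)`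
  choose σ hσl hσ0 hσe using fun n => exists_back_path M w n (ρ n) (hρV n)
  set β := konigLimit σ with hβ
  have hunb : ∀ l k, ∃ n ∈ (konig σ l).1, k ≤ n := fun l k => infinite_exists_ge (konig σ l).2 k
  have hedge : ∀ l, M.EdgeE w l (β l) (β (l + 1)) := by
    intro l
    obtain ⟨n, hn, hkn⟩ := hunb (l + 1) (l + 2)
    have h1 : σ n l = β l := konigLimit_eq σ (by omega) hn
    have h2 : σ n (l + 1) = β (l + 1) := konigLimit_eq σ le_rfl hn
    rw [← h1, ← h2]
    exact hσe n l (by omega)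
  refine ⟨β, hedge, ?_⟩
  -- the spliced runs are accepting
  set τ : ℕ → ℕ → Q := fun n m => if m ≤ n then σ n m else ρ m with hτ
  have hτacc : ∀ n, 1 ≤ n → M.IsAccRun w (τ n) := by
    intro n hn1
    refine ⟨⟨?_, ?_⟩, ?_⟩
    · simpa [hτ, Nat.le_of_lt hn1] using hσ0 n
    · intro i
      by_cases hi : i + 1 ≤ n
      · have hin : i ≤ n := by omega
        have hτi : τ n i = σ n i := by simp [hτ, hin]
        have hτi1 : τ n (i + 1) = σ n (i + 1) := by simp [hτ, hi]
        rw [hτi, hτi1]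
        exact (hσe n i (by omega)).1.2
      · by_cases hi' : i ≤ n
        · have hin : i = n := by omega
          have hτi : τ n i = ρ i := by
            simp only [hτ, hin]
            rw [if_pos le_rfl, hσl n]
          have hτi1 : τ n (i + 1) = ρ (i + 1) := by
            simp only [hτ, hin]
            rw [if_neg (by omega)]
          rw [hτi, hτi1]
          exact hρrun.2 i
        · have hτi : τ n i = ρ i := by simp [hτ, hi']
          have hin1 : ¬ i + 1 ≤ n := by omega
          have hτi1 : τ n (i + 1) = ρ (i + 1) := by simp [hτ, hin1]
          rw [hτi, hτi1]
          exact hρrun.2 i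
    · intro k
      obtain ⟨m, hm, hmF⟩ := hρacc (max k (n + 1))
      refine ⟨m, le_trans (le_max_left _ _) hm, ?_⟩
      have : ¬ m ≤ n := by omega
      simpa [hτ, this] using hmF
  -- pick, for each `l`, a member of `konig σ l` beyond `l`
  choose nl hnl hnlge using fun l => hunb l (l + 1)
  have hg : ∀ l, (fun l => τ (nl l)) l ∈ {ρ' | M.IsAccRun w ρ'} := fun l =>
    hτacc (nl l) (by have := hnlge l; omega)
  obtain ⟨t, ht⟩ := exists_infinite_fiber' (Set.infinite_univ (α := ℕ))
    (fun l => τ (nl l)) (hFA w) (fun l _ => hg l)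
  have htacc : M.IsAccRun w t := by
    obtain ⟨l, hl⟩ := ht.nonempty
    rw [← hl.2]
    exact hg l
  -- `β` agrees with the accepting run `t` on arbitrarily long prefixes
  intro k
  obtain ⟨m, hmk, hmF⟩ := htacc.2 k
  obtain ⟨l, hl, hlm⟩ := infinite_exists_ge ht m
  have hlset : l ∈ Set.univ ∧ τ (nl l) = t := hl
  have hmn : m ≤ nl l := by have := hnlge l; omega
  have h1 : τ (nl l) m = σ (nl l) m := by
    simp only [hτ]
    rw [if_pos hmn]
  have h2 : σ (nl l) m = β m := konigLimit_eq σ hlm (hnl l)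
  exact ⟨m, hmk, by rw [← h2, ← h1, hlset.2]; exact hmF⟩

end MaxRankAux

section MaxRankMain

variable [Fintype Q] [LinearOrder Q] (M : NBW Q A) (w : ℕ → A)

/-- Nonfinite states at level `l` (states of `G¹`). -/
def N1 (l : ℕ) : Set Q :=
  {q | (q, l) ∈ DagStrip (M.EdgeE w) M.F (M.DagVertices w) 1}

lemma mem_G0_of_V {q : Q} {l : ℕ} (h : q ∈ M.V w l) : (q, l) ∈ M.DagVertices w := h

lemma G1_subset_G0 : DagStrip (M.EdgeE w) M.F (M.DagVertices w) 1 ⊆ M.DagVertices w := by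
  rw [strip1]; exact Set.diff_subset

lemma G2_subset_G1 :
    DagStrip (M.EdgeE w) M.F (M.DagVertices w) 2 ⊆
      DagStrip (M.EdgeE w) M.F (M.DagVertices w) 1 := by
  rw [strip2]; exact Set.diff_subset

/-- Backward closure of `G¹`: a nonfinite vertex has a nonfinite predecessor. -/
lemma back_G1 {q' : Q} {l : ℕ}
    (h : (q', l + 1) ∈ DagStrip (M.EdgeE w) M.F (M.DagVertices w) 1) :
    ∃ p, M.EdgeE w l p q' ∧ (p, l) ∈ DagStrip (M.EdgeE w) M.F (M.DagVertices w) 1 := by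
  rw [strip1] at h ⊢
  obtain ⟨hG0, hnf⟩ := h
  have hq'V : q' ∈ M.V w (l + 1) := hG0
  obtain ⟨p, hp⟩ := exists_pred M w hq'V
  rw [Set.mem_setOf_eq, DagFiniteIn, not_not] at hnf
  obtain ⟨b, hb0, hbmem, hbe⟩ := hnf
  refine ⟨p, hp, ⟨hp.1.1, ?_⟩⟩
  rw [Set.mem_setOf_eq, DagFiniteIn, not_not]
  refine ⟨fun i => if i = 0 then p else b (i - 1), rfl, ?_, ?_⟩
  · intro i
    cases i with
    | zero => exact hp.1.1
    | succ j =>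
      have := hbmem j
      simpa [show l + (j + 1) = l + 1 + j by omega] using this
  · intro i
    cases i with
    | zero => simpa [hb0] using hp
    | succ j =>
      have := hbe j
      simpa [show l + (j + 1) = l + 1 + j by omega,
        show l + (j + 1 + 1) = l + 1 + (j + 1) by omega] using this

/-- Forward closure of `G¹`: a nonfinite vertex has a nonfinite `EdgeE`-successor. -/
lemma fwd_G1 {p : Q} {l : ℕ}
    (h : (p, l) ∈ DagStrip (M.EdgeE w) M.F (M.DagVertices w) 1) :
    ∃ q', M.EdgeE w l p q' ∧ (q', l + 1) ∈ DagStrip (M.EdgeE w) M.F (M.DagVertices w) 1 := by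
  rw [strip1] at h ⊢
  obtain ⟨hG0, hnf⟩ := h
  rw [Set.mem_setOf_eq, DagFiniteIn, not_not] at hnf
  obtain ⟨b, hb0, hbmem, hbe⟩ := hnf
  have he0 : M.EdgeE w l p (b 1) := by
    have := hbe 0
    simpa [hb0] using this
  refine ⟨b 1, he0, ⟨edgeE_target M w he0, ?_⟩⟩
  rw [Set.mem_setOf_eq, DagFiniteIn, not_not]
  refine ⟨fun i => b (i + 1), rfl, ?_, ?_⟩
  · intro i
    have := hbmem (i + 1)
    simpa [show l + 1 + i = l + (i + 1) by omega] using this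
  · intro i
    have := hbe (i + 1)
    simpa [show l + 1 + i = l + (i + 1) by omega] using this

/-- The chosen nonfinite `EdgeE`-successor map. -/
noncomputable def nextQ (l : ℕ) (p : Q) : Q :=
  if h : (p, l) ∈ DagStrip (M.EdgeE w) M.F (M.DagVertices w) 1 then (fwd_G1 M w h).choose
  else p

lemma nextQ_spec {l : ℕ} {p : Q}
    (h : (p, l) ∈ DagStrip (M.EdgeE w) M.F (M.DagVertices w) 1) :
    M.EdgeE w l p (nextQ M w l p) ∧
      (nextQ M w l p, l + 1) ∈ DagStrip (M.EdgeE w) M.F (M.DagVertices w) 1 := by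
  rw [nextQ, dif_pos h]
  exact (fwd_G1 M w h).choose_spec

lemma nextQ_mapsTo (l : ℕ) : Set.MapsTo (nextQ M w l) (N1 M w l) (N1 M w (l + 1)) :=
  fun p hp => (nextQ_spec M w hp).2

lemma nextQ_injOn (l : ℕ) : Set.InjOn (nextQ M w l) (N1 M w l) := by
  intro p₁ h₁ p₂ h₂ he
  have e₁ := (nextQ_spec M w h₁).1
  have e₂ := (nextQ_spec M w h₂).1
  rw [he] at e₁
  exact edgeE_unique M w e₁ e₂

lemma N1_card_mono (l : ℕ) : (N1 M w l).ncard ≤ (N1 M w (l + 1)).ncard :=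
  Set.ncard_le_ncard_of_injOn (nextQ M w l) (nextQ_mapsTo M w l) (nextQ_injOn M w l)
    (Set.toFinite _)

lemma exists_stable : ∃ S, ∀ l, S ≤ l → (N1 M w l).ncard = (N1 M w S).ncard := by
  set c : ℕ → ℕ := fun l => (N1 M w l).ncard with hc
  have hmono : Monotone c := monotone_nat_of_le_succ (N1_card_mono M w)
  have hbdd : BddAbove (Set.range c) := by
    refine ⟨Fintype.card Q, ?_⟩
    rintro _ ⟨l, rfl⟩
    have h1 : c l ≤ (Set.univ : Set Q).ncard :=
      Set.ncard_le_ncard (Set.subset_univ _) Set.finite_univ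
    have h2 : (Set.univ : Set Q).ncard = Fintype.card Q := by
      rw [Set.ncard_univ, Nat.card_eq_fintype_card]
    omega
  obtain ⟨S, hS⟩ := Nat.sSup_mem (Set.range_nonempty c) hbdd
  refine ⟨S, fun l hl => le_antisymm ?_ (hmono hl)⟩
  show c l ≤ c S
  rw [hS]
  exact le_csSup hbdd ⟨l, rfl⟩

/-- After the stabilization level, a nonfinite vertex has a unique nonfinite successor. -/
lemma succ_unique {S l : ℕ} (hst : ∀ l', S ≤ l' → (N1 M w l').ncard = (N1 M w S).ncard)
    (hl : S ≤ l) {p q₁ q₂ : Q}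
    (h1 : M.EdgeE w l p q₁)
    (hg1 : (q₁, l + 1) ∈ DagStrip (M.EdgeE w) M.F (M.DagVertices w) 1)
    (h2 : M.EdgeE w l p q₂)
    (hg2 : (q₂, l + 1) ∈ DagStrip (M.EdgeE w) M.F (M.DagVertices w) 1) :
    q₁ = q₂ := by
  have hcard : (N1 M w (l + 1)).ncard ≤ (nextQ M w l '' N1 M w l).ncard := by
    rw [Set.ncard_image_of_injOn (nextQ_injOn M w l), hst l hl, hst (l + 1) (by omega)]
  have himg : nextQ M w l '' N1 M w l = N1 M w (l + 1) :=
    Set.eq_of_subset_of_ncard_le (Set.image_subset_iff.mpr (nextQ_mapsTo M w l)) hcard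
      (Set.toFinite _)
  have hsurj : ∀ q ∈ N1 M w (l + 1), ∃ p' ∈ N1 M w l, nextQ M w l p' = q := by
    intro q hq
    rw [← himg] at hq
    obtain ⟨p', hp', hpq⟩ := hq
    exact ⟨p', hp', hpq⟩
  obtain ⟨p₁, hp₁, hpq₁⟩ := hsurj q₁ hg1
  obtain ⟨p₂, hp₂, hpq₂⟩ := hsurj q₂ hg2
  have e₁ := (nextQ_spec M w hp₁).1
  rw [hpq₁] at e₁
  have e₂ := (nextQ_spec M w hp₂).1
  rw [hpq₂] at e₂
  have : p₁ = p := edgeE_unique M w e₁ h1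
  subst this
  have : p₂ = p₁ := edgeE_unique M w e₂ h2
  subst this
  rw [← hpq₁, ← hpq₂]

/-- Direction A: if `G³` is nonempty then `w` is accepted. -/
lemma accepts_of_G3_nonempty
    (h : (DagStrip (M.EdgeE w) M.F (M.DagVertices w) 3).Nonempty) : M.Accepts w := by
  obtain ⟨v, hv3⟩ := h
  rw [strip3] at hv3
  obtain ⟨hv2, hvnf⟩ := hv3
  rw [Set.mem_setOf_eq, DagFiniteIn, not_not] at hvnf
  obtain ⟨b, hb0, hbmem, hbe⟩ := hvnf
  obtain ⟨S, hS⟩ := exists_stable M w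
  set j₀ := S - v.2 with hj₀
  -- every vertex on the branch is in G2 hence in G1
  have hbG2 : ∀ j, (b j, v.2 + j) ∈ DagStrip (M.EdgeE w) M.F (M.DagVertices w) 2 := hbmem
  have hbG1 : ∀ j, (b j, v.2 + j) ∈ DagStrip (M.EdgeE w) M.F (M.DagVertices w) 1 :=
    fun j => G2_subset_G1 M w (hbG2 j)
  -- reachability in G1 from a late branch vertex stays on the branch
  have hreach : ∀ j, j₀ ≤ j → ∀ v',
      Relation.ReflTransGen
        (DagStep (M.EdgeE w) (DagStrip (M.EdgeE w) M.F (M.DagVertices w) 1))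
        (b j, v.2 + j) v' →
      ∃ j', j ≤ j' ∧ v' = (b j', v.2 + j') := by
    intro j hj v' hrt
    induction hrt with
    | refl => exact ⟨j, le_rfl, rfl⟩
    | @tail u x hab hbc ih =>
      obtain ⟨j', hj', rfl⟩ := ih
      obtain ⟨hmem1, hmem2, hlev, hE⟩ := hbc
      have hg1' : (x.1, v.2 + j' + 1) ∈ DagStrip (M.EdgeE w) M.F (M.DagVertices w) 1 := by
        have hxeq : x = (x.1, v.2 + j' + 1) := Prod.ext rfl hlev
        rwa [hxeq] at hmem2
      have hgb : (b (j' + 1), v.2 + j' + 1) ∈ DagStrip (M.EdgeE w) M.F (M.DagVertices w) 1 := by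
        have := hbG1 (j' + 1)
        simpa [show v.2 + (j' + 1) = v.2 + j' + 1 by omega] using this
      have hq : x.1 = b (j' + 1) :=
        succ_unique M w hS (by omega) hE hg1' (hbe j') hgb
      refine ⟨j' + 1, by omega, ?_⟩
      rw [show v.2 + (j' + 1) = v.2 + j' + 1 by omega]
      exact Prod.ext hq hlev
  -- the branch visits `F` infinitely often
  have hFio : ∀ j, j₀ ≤ j → ∃ j', j ≤ j' ∧ b j' ∈ M.F := by
    intro j hj
    have h2 := hbG2 j
    rw [strip2] at h2
    have hnff := h2.2
    rw [Set.mem_setOf_eq] at hnff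
    unfold DagFFreeIn at hnff
    push_neg at hnff
    have hnf : ¬ DagFiniteIn (M.EdgeE w) (DagStrip (M.EdgeE w) M.F (M.DagVertices w) 1)
        (b j, v.2 + j) := by
      rw [DagFiniteIn, not_not]
      refine ⟨fun i => b (j + i), rfl, ?_, ?_⟩
      · intro i
        have := hbG1 (j + i)
        simpa [show v.2 + (j + i) = v.2 + j + i by omega] using this
      · intro i
        have := hbe (j + i)
        simpa [show v.2 + (j + i) = v.2 + j + i by omega,
          show j + i + 1 = j + (i + 1) by omega] using this
    obtain ⟨v', hv'r, hv'F⟩ := hnff hnf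
    obtain ⟨j', hj', rfl⟩ := hreach j hj v' hv'r
    exact ⟨j', hj', hv'F⟩
  -- assemble the accepting run: backward path to level 0, then the branch
  have hvV : v.1 ∈ M.V w v.2 := G1_subset_G0 M w (G2_subset_G1 M w hv2)
  obtain ⟨σ, hσl, hσ0, hσe⟩ := exists_back_path M w v.2 v.1 hvV
  refine ⟨fun m => if m < v.2 then σ m else b (m - v.2), ⟨?_, ?_⟩, ?_⟩
  · by_cases h0 : 0 < v.2
    · simpa [h0] using hσ0
    · have hv20 : v.2 = 0 := by omega
      simp only [h0, if_neg]
      simp only [hv20, Nat.sub_zero, hb0]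
      have : v.1 ∈ M.V w 0 := by rwa [hv20] at hvV
      exact this
  · intro m
    rcases lt_trichotomy (m + 1) v.2 with hm | hm | hm
    · have h1 : m < v.2 := by omega
      simp only [if_pos h1, if_pos hm]
      exact (hσe m h1).1.2
    · have h1 : m < v.2 := by omega
      have h2 : ¬ (m + 1 < v.2) := by omega
      simp only [if_pos h1, if_neg h2]
      have : b (m + 1 - v.2) = v.1 := by
        rw [show m + 1 - v.2 = 0 by omega, hb0]
      rw [this, ← hσl, ← hm]
      exact (hσe m h1).1.2
    · have h1 : ¬ (m < v.2) := by omega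
      have h2 : ¬ (m + 1 < v.2) := by omega
      simp only [if_neg h1, if_neg h2]
      have := (hbe (m - v.2)).1.2
      rw [show v.2 + (m - v.2) = m by omega] at this
      rw [show m + 1 - v.2 = m - v.2 + 1 by omega]
      exact this
  · intro k
    obtain ⟨j', hj', hF⟩ := hFio (max j₀ k) (le_max_left _ _)
    refine ⟨v.2 + j', by omega, ?_⟩
    have h1 : ¬ (v.2 + j' < v.2) := by omega
    simp only [if_neg h1]
    rw [show v.2 + j' - v.2 = j' by omega]
    exact hF

/-- Direction B: if `w` is accepted, then `G³` is nonempty. -/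
lemma G3_nonempty_of_accepts (hFA : M.FA) (hacc : M.Accepts w) :
    (DagStrip (M.EdgeE w) M.F (M.DagVertices w) 3).Nonempty := by
  obtain ⟨β, hedge, hFio⟩ := acc_branchE_of_accepts M w hFA hacc
  have hV : ∀ l, β l ∈ M.V w l := fun l => (hedge l).1.1
  have hG0 : ∀ l, (β l, l) ∈ M.DagVertices w := fun l => hV l
  -- the branch lives in G0, hence in G1
  have hbranch : ∀ (U : Set (Q × ℕ)), (∀ l, (β l, l) ∈ U) →
      ∀ l, DagBranchIn (M.EdgeE w) U (β l, l) (fun i => β (l + i)) := by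
    intro U hU l
    refine ⟨rfl, fun i => hU (l + i), fun i => ?_⟩
    have := hedge (l + i)
    simpa [show l + i + 1 = l + (i + 1) by omega] using this
  have hG1 : ∀ l, (β l, l) ∈ DagStrip (M.EdgeE w) M.F (M.DagVertices w) 1 := by
    intro l
    rw [strip1]
    refine ⟨hG0 l, ?_⟩
    rw [Set.mem_setOf_eq, DagFiniteIn, not_not]
    exact ⟨_, hbranch _ hG0 l⟩
  have hreachβ : ∀ l m, l ≤ m → Relation.ReflTransGen
      (DagStep (M.EdgeE w) (DagStrip (M.EdgeE w) M.F (M.DagVertices w) 1))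
      (β l, l) (β m, m) := by
    intro l m hm
    induction m, hm using Nat.le_induction with
    | base => exact Relation.ReflTransGen.refl
    | succ m hlm ih =>
      exact Relation.ReflTransGen.tail ih ⟨hG1 m, hG1 (m + 1), rfl, hedge m⟩
  have hG2 : ∀ l, (β l, l) ∈ DagStrip (M.EdgeE w) M.F (M.DagVertices w) 2 := by
    intro l
    rw [strip2]
    refine ⟨hG1 l, ?_⟩
    rw [Set.mem_setOf_eq]
    unfold DagFFreeIn
    push_neg
    intro hnf
    obtain ⟨m, hm, hmF⟩ := hFio l
    exact ⟨(β m, m), hreachβ l m hm, hmF⟩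
  refine ⟨(β 0, 0), ?_⟩
  rw [strip3]
  refine ⟨hG2 0, ?_⟩
  rw [Set.mem_setOf_eq, DagFiniteIn, not_not]
  exact ⟨_, hbranch _ hG2 0⟩

end MaxRankMain

/-- maximum rank of co-deterministic DAGs of FANBWs: with
`G⁰ = G^e_{w,M}`, `G^{2i+1} = G^{2i}` minus finite vertices and `G^{2i+2} = G^{2i+1}`
minus `F`-free vertices, we have `w ∉ L(M)` iff `G³` is empty; hence, when `w ∉ L(M)`,
every vertex gets rank at most 2 (it is finite in `G⁰` or `G²`, or `F`-free in `G¹`). -/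
theorem codet_dag_max_rank_two
    [Fintype Q] [LinearOrder Q] (M : NBW Q A) (hFA : M.FA) (w : ℕ → A) :
    (¬ M.Accepts w ↔ DagStrip (M.EdgeE w) M.F (M.DagVertices w) 3 = ∅) ∧
    (¬ M.Accepts w → ∀ v ∈ M.DagVertices w,
      DagFiniteIn (M.EdgeE w) (DagStrip (M.EdgeE w) M.F (M.DagVertices w) 0) v ∨
      DagFFreeIn (M.EdgeE w) (DagStrip (M.EdgeE w) M.F (M.DagVertices w) 1) M.F v ∨
      DagFiniteIn (M.EdgeE w) (DagStrip (M.EdgeE w) M.F (M.DagVertices w) 2) v) := by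
  have hiff : ¬ M.Accepts w ↔ DagStrip (M.EdgeE w) M.F (M.DagVertices w) 3 = ∅ := by
    constructor
    · intro hna
      by_contra hne
      rw [← Ne, ← Set.nonempty_iff_ne_empty] at hne
      exact hna (accepts_of_G3_nonempty M w hne)
    · intro he hacc
      have hn := G3_nonempty_of_accepts M w hFA hacc
      rw [he] at hn
      exact Set.not_nonempty_empty hn
  refine ⟨hiff, ?_⟩
  intro hna v hv
  have h3 : DagStrip (M.EdgeE w) M.F (M.DagVertices w) 3 = ∅ := hiff.mp hna
  by_cases h0 : DagFiniteIn (M.EdgeE w) (DagStrip (M.EdgeE w) M.F (M.DagVertices w) 0) v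
  · exact Or.inl h0
  by_cases h1 : DagFFreeIn (M.EdgeE w) (DagStrip (M.EdgeE w) M.F (M.DagVertices w) 1) M.F v
  · exact Or.inr (Or.inl h1)
  refine Or.inr (Or.inr ?_)
  have hv1 : v ∈ DagStrip (M.EdgeE w) M.F (M.DagVertices w) 1 := by
    rw [strip1]
    exact ⟨hv, h0⟩
  have hv2 : v ∈ DagStrip (M.EdgeE w) M.F (M.DagVertices w) 2 := by
    rw [strip2]
    exact ⟨hv1, h1⟩
  by_contra h2
  have hv3 : v ∈ DagStrip (M.EdgeE w) M.F (M.DagVertices w) 3 := by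
    rw [strip3]
    exact ⟨hv2, h2⟩
  rw [h3] at hv3
  exact hv3
end

section
/- The slice-based construction for general NBWs yields a co-deterministic DAG G^s_{w,A} whose levels are ordered sequences of pairwise disjoint nonempty sets of states, such that: (1) the number of ω-branches of G^s_{w,A} is at most |Q|; (2) w ∈ L(A) iff G^s_{w,A} has an accepting ω-branch; (3) w ∉ L(A) iff there is a stable level l ≥ 1 after which every F-vertex of G^s_{w,A} is finite. -/
open Classical

variable {Q : Type} {A : Type}

section SliceAux

open NBW Set

variable (M : NBW Q A) (w : ℕ → A)

/-- Successor candidate sets of the slice construction. -/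
def SP (l q : ℕ) : Set Q :=
  if q % 2 = 0 then M.δset (M.sliceSet w l (q / 2)) (w l) \ M.F
  else M.δset (M.sliceSet w l (q / 2)) (w l) ∩ M.F

lemma sliceSet_succ (l p : ℕ) :
    M.sliceSet w (l + 1) p = SP M w l p \ ⋃ q ∈ Set.Ioi p, SP M w l q := rfl

variable {M w}

lemma mem_δset {S : Set Q} {a : A} {q' : Q} :
    q' ∈ M.δset S a ↔ ∃ q ∈ S, q' ∈ M.δ q a := by simp [NBW.δset]

lemma δset_empty (a : A) : M.δset (∅ : Set Q) a = ∅ := by simp [NBW.δset]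

lemma δset_mono {S T : Set Q} (h : S ⊆ T) (a : A) : M.δset S a ⊆ M.δset T a := by
  intro x hx
  rw [mem_δset] at hx ⊢
  obtain ⟨q, hq, h2⟩ := hx
  exact ⟨q, h hq, h2⟩

lemma SP_subset (l q : ℕ) : SP M w l q ⊆ M.δset (M.sliceSet w l (q / 2)) (w l) := by
  unfold SP; split
  · exact Set.diff_subset
  · exact Set.inter_subset_left

lemma slice_subset_SP (l p : ℕ) : M.sliceSet w (l + 1) p ⊆ SP M w l p := by
  rw [sliceSet_succ]; exact Set.diff_subset

lemma SP_empty (l q : ℕ) (h : M.sliceSet w l (q / 2) = ∅) : SP M w l q = ∅ := by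
  have h2 := SP_subset (M := M) (w := w) l q
  rw [h, δset_empty] at h2
  exact Set.subset_empty_iff.mp h2

lemma slice_empty_of_ge : ∀ l p, 2 ^ (l + 1) ≤ p → M.sliceSet w l p = ∅ := by
  intro l
  induction l with
  | zero =>
    intro p hp
    show (if p = 0 then M.I \ M.F else if p = 1 then M.I ∩ M.F else ∅) = ∅
    rw [if_neg (by omega), if_neg (by omega)]
  | succ l ih =>
    intro p hp
    have hdiv : 2 ^ (l + 1) ≤ p / 2 := by
      rw [Nat.le_div_iff_mul_le (by omega)]
      calc 2 ^ (l + 1) * 2 = 2 ^ (l + 2) := by ring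
        _ ≤ p := hp
    have := SP_empty (M := M) (w := w) l p (ih _ hdiv)
    have h2 := slice_subset_SP (M := M) (w := w) l p
    rw [this] at h2
    exact Set.subset_empty_iff.mp h2

lemma slice_pos_lt {l p : ℕ} (h : M.sliceSet w l p ≠ ∅) : p < 2 ^ (l + 1) := by
  by_contra hc
  exact h (slice_empty_of_ge l p (by omega))

lemma parent_ne {l p : ℕ} (h : M.sliceSet w (l + 1) p ≠ ∅) :
    M.sliceSet w l (p / 2) ≠ ∅ := by
  intro hc
  have := SP_empty (M := M) (w := w) l p hc
  have h2 := slice_subset_SP (M := M) (w := w) l p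
  rw [this] at h2
  exact h (Set.subset_empty_iff.mp h2)

lemma anc_ne : ∀ (j l : ℕ) {p : ℕ}, M.sliceSet w (l + j) p ≠ ∅ →
    M.sliceSet w l (p / 2 ^ j) ≠ ∅ := by
  intro j
  induction j with
  | zero => intro l p h; simpa using h
  | succ j ih =>
    intro l p h
    have h1 : M.sliceSet w (l + j) (p / 2) ≠ ∅ := parent_ne h
    have h2 := ih l h1
    have : p / 2 / 2 ^ j = p / 2 ^ (j + 1) := by
      rw [Nat.div_div_eq_div_mul, ← pow_succ']
    rwa [this] at h2

lemma slice_disjoint (l : ℕ) {p p' : ℕ} (h : p ≠ p') :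
    Disjoint (M.sliceSet w l p) (M.sliceSet w l p') := by
  -- reduce to p < p'
  wlog hlt : p < p' generalizing p p'
  · exact (this h.symm (by omega)).symm
  cases l with
  | zero =>
    rcases Nat.lt_or_ge p' 2 with h2 | h2
    · have hp0 : p = 0 := by omega
      have hp1 : p' = 1 := by omega
      subst hp0; subst hp1
      rw [Set.disjoint_left]
      intro x hx hx'
      exact hx.2 hx'.2
    · have : M.sliceSet w 0 p' = ∅ := slice_empty_of_ge 0 p' (by simpa using h2)
      rw [this]; exact disjoint_bot_right
  | succ l =>
    rw [Set.disjoint_left]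
    intro x hx hx'
    rw [sliceSet_succ] at hx
    refine hx.2 ?_
    refine Set.mem_biUnion hlt ?_
    exact slice_subset_SP l p' hx'

lemma odd_subset_F {l p : ℕ} (h : p % 2 = 1) : M.sliceSet w l p ⊆ M.F := by
  cases l with
  | zero =>
    show (if p = 0 then M.I \ M.F else if p = 1 then M.I ∩ M.F else ∅) ⊆ M.F
    rw [if_neg (by omega)]
    split
    · exact Set.inter_subset_right
    · exact Set.empty_subset _
  | succ l =>
    refine (slice_subset_SP l p).trans ?_
    unfold SP
    rw [if_neg (by omega)]
    exact Set.inter_subset_right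

lemma even_disjoint_F {l p : ℕ} (h : p % 2 = 0) {x : Q}
    (hx : x ∈ M.sliceSet w l p) : x ∉ M.F := by
  cases l with
  | zero =>
    have hx' : x ∈ (if p = 0 then M.I \ M.F else if p = 1 then M.I ∩ M.F else ∅) := hx
    rcases eq_or_ne p 0 with rfl | hp
    · rw [if_pos rfl] at hx'; exact hx'.2
    · rw [if_neg hp, if_neg (by omega)] at hx'; exact absurd hx' (by simp)
  | succ l =>
    have hx' := slice_subset_SP l p hx
    unfold SP at hx'
    rw [if_pos h] at hx'
    exact hx'.2

lemma level0_sub_I (p : ℕ) : M.sliceSet w 0 p ⊆ M.I := by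
  show (if p = 0 then M.I \ M.F else if p = 1 then M.I ∩ M.F else ∅) ⊆ M.I
  split
  · exact Set.diff_subset
  split
  · exact Set.inter_subset_left
  · exact Set.empty_subset _

end SliceAux
section SliceAux2

open NBW Set

variable {M : NBW Q A} {w : ℕ → A}

lemma slice_iUnion : ∀ l, (⋃ p, M.sliceSet w l p) = M.V w l := by
  intro l
  induction l with
  | zero =>
    ext x
    simp only [Set.mem_iUnion]
    constructor
    · rintro ⟨p, hp⟩; exact level0_sub_I p hp
    · intro hx
      have hI : x ∈ M.I := hx
      by_cases hF : x ∈ M.F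
      · exact ⟨1, by show x ∈ (if (1:ℕ) = 0 then _ else if (1:ℕ) = 1 then M.I ∩ M.F else _); simp [hI, hF]⟩
      · exact ⟨0, by show x ∈ (if (0:ℕ) = 0 then M.I \ M.F else _); simp [hI, hF]⟩
  | succ l ih =>
    ext x
    simp only [Set.mem_iUnion]
    constructor
    · rintro ⟨p, hp⟩
      have h1 := (slice_subset_SP l p).trans (SP_subset l p) hp
      show x ∈ M.δset (M.V w l) (w l)
      rw [← ih]
      exact δset_mono (Set.subset_iUnion _ _) _ h1
    · intro hx
      have hx' : x ∈ M.δset (⋃ p, M.sliceSet w l p) (w l) := by rwa [ih]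
      rw [mem_δset] at hx'
      obtain ⟨q, hq, hδ⟩ := hx'
      rw [Set.mem_iUnion] at hq
      obtain ⟨p₀, hp₀⟩ := hq
      -- x belongs to some SP set
      set q₀ : ℕ := if x ∈ M.F then 2 * p₀ + 1 else 2 * p₀ with hq₀def
      have hq₀ : x ∈ SP M w l q₀ := by
        unfold SP
        by_cases hF : x ∈ M.F
        · rw [hq₀def, if_pos hF, if_neg (by omega)]
          have : (2 * p₀ + 1) / 2 = p₀ := by omega
          rw [this]
          exact ⟨mem_δset.mpr ⟨q, hp₀, hδ⟩, hF⟩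
        · rw [hq₀def, if_neg hF, if_pos (by omega)]
          have : (2 * p₀) / 2 = p₀ := by omega
          rw [this]
          exact ⟨mem_δset.mpr ⟨q, hp₀, hδ⟩, hF⟩
      -- the set of positions containing x is nonempty and bounded
      set S : Set ℕ := {r | x ∈ SP M w l r} with hSdef
      have hSne : S.Nonempty := ⟨q₀, hq₀⟩
      have hSbd : BddAbove S := by
        refine ⟨2 ^ (l + 2), fun r hr => ?_⟩
        by_contra hc
        have hdiv : 2 ^ (l + 1) ≤ r / 2 := by
          rw [Nat.le_div_iff_mul_le (by omega)]
          have : 2 ^ (l+1) * 2 = 2 ^ (l+2) := by ring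
          omega
        have : SP M w l r = ∅ := SP_empty l r (slice_empty_of_ge _ _ hdiv)
        rw [hSdef] at hr
        simp only [Set.mem_setOf_eq, this] at hr
        exact hr
      have hmax := Nat.sSup_mem hSne hSbd
      refine ⟨sSup S, ?_⟩
      rw [sliceSet_succ]
      refine ⟨hmax, ?_⟩
      intro hc
      rw [Set.mem_iUnion₂] at hc
      obtain ⟨r, hr, hxr⟩ := hc
      have : r ≤ sSup S := le_csSup hSbd hxr
      exact absurd this (by simpa using hr)

lemma mem_V_of_run {ρ : ℕ → Q} (h : M.IsRun w ρ) : ∀ l, ρ l ∈ M.V w l := by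
  intro l
  induction l with
  | zero => exact h.1
  | succ l ih =>
    show ρ (l + 1) ∈ M.δset (M.V w l) (w l)
    exact mem_δset.mpr ⟨ρ l, ih, h.2 l⟩

lemma exists_unique_pos {l : ℕ} {x : Q} (h : x ∈ M.V w l) :
    ∃! p, x ∈ M.sliceSet w l p := by
  have hx : x ∈ ⋃ p, M.sliceSet w l p := by rw [slice_iUnion]; exact h
  rw [Set.mem_iUnion] at hx
  obtain ⟨p, hp⟩ := hx
  refine ⟨p, hp, fun p' hp' => ?_⟩
  by_contra hne
  exact Set.disjoint_left.mp (slice_disjoint l hne) hp' hp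

lemma mono_bdd_ev_const (f : ℕ → ℕ) (hf : Monotone f) (B : ℕ) (hB : ∀ n, f n ≤ B) :
    ∃ N, ∀ l, N ≤ l → f l = f N := by
  have hbd : BddAbove (Set.range f) := ⟨B, by rintro _ ⟨n, rfl⟩; exact hB n⟩
  have hmem := Nat.sSup_mem (Set.range_nonempty f) hbd
  obtain ⟨N, hN⟩ := hmem
  refine ⟨N, fun l hl => ?_⟩
  have h1 : f l ≤ sSup (Set.range f) := le_csSup hbd ⟨l, rfl⟩
  have h2 : f N ≤ f l := hf hl
  omega

lemma exists_chain {α : Type*} (P : ℕ → α → Prop) (R : ℕ → α → α → Prop)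
    (h0 : ∃ q, P 0 q)
    (hstep : ∀ n q, P n q → ∃ q', R n q q' ∧ P (n + 1) q') :
    ∃ ρ : ℕ → α, (∀ n, P n (ρ n)) ∧ ∀ n, R n (ρ n) (ρ (n + 1)) := by
  choose f hf hf' using hstep
  obtain ⟨q0, hq0⟩ := h0
  let F : (n : ℕ) → {q // P n q} := fun n =>
    Nat.rec ⟨q0, hq0⟩ (fun n p => ⟨f n p.1 p.2, hf' n p.1 p.2⟩) n
  refine ⟨fun n => (F n).1, fun n => (F n).2, fun n => ?_⟩
  show R n (F n).1 (F (n + 1)).1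
  exact hf n (F n).1 (F n).2

end SliceAux2
section SliceAux3

open NBW Set

variable {M : NBW Q A} {w : ℕ → A}

/-- A forward path of length `n` from `q` at level `l`, staying in the sets `T`. -/
def PathFrom (M : NBW Q A) (w : ℕ → A) (T : ℕ → Set Q) (l : ℕ) (q : Q) (n : ℕ) : Prop :=
  ∃ f : ℕ → Q, f 0 = q ∧ (∀ i, i ≤ n → f i ∈ T (l + i)) ∧
    ∀ i, i < n → f (i + 1) ∈ M.δ (f i) (w (l + i))

lemma pathFrom_mono {T : ℕ → Set Q} {l : ℕ} {q : Q} {m n : ℕ} (h : m ≤ n)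
    (hp : PathFrom M w T l q n) : PathFrom M w T l q m := by
  obtain ⟨f, h0, h1, h2⟩ := hp
  exact ⟨f, h0, fun i hi => h1 i (hi.trans h), fun i hi => h2 i (lt_of_lt_of_le hi h)⟩

lemma pathFrom_exists {T : ℕ → Set Q} (hne : ∀ l, (T l).Nonempty)
    (hpred : ∀ l q, q ∈ T (l + 1) → ∃ q' ∈ T l, q ∈ M.δ q' (w l)) :
    ∀ n l, ∃ q ∈ T l, PathFrom M w T l q n := by
  intro n
  induction n with
  | zero =>
    intro l
    obtain ⟨q, hq⟩ := hne l
    refine ⟨q, hq, fun _ => q, rfl, fun i hi => ?_, fun i hi => by omega⟩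
    have : i = 0 := by omega
    subst this; simpa using hq
  | succ n ih =>
    intro l
    obtain ⟨q', hq', f, hf0, hfT, hfδ⟩ := ih (l + 1)
    obtain ⟨q, hq, hδ⟩ := hpred l q' hq'
    refine ⟨q, hq, fun i => Nat.casesOn i q f, rfl, ?_, ?_⟩
    · intro i hi
      cases i with
      | zero => simpa using hq
      | succ j =>
        have he : l + (j + 1) = (l + 1) + j := by omega
        rw [he]
        exact hfT j (by omega)
    · intro i hi
      cases i with
      | zero => show f 0 ∈ M.δ q (w (l + 0)); rw [hf0]; simpa using hδ
      | succ j =>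
        have he : l + (j + 1) = (l + 1) + j := by omega
        rw [he]
        exact hfδ j (by omega)

lemma exists_good [Finite Q] {T : ℕ → Set Q} (hne : ∀ l, (T l).Nonempty)
    (hpred : ∀ l q, q ∈ T (l + 1) → ∃ q' ∈ T l, q ∈ M.δ q' (w l)) (l : ℕ) :
    ∃ q, ∀ n, PathFrom M w T l q n := by
  have hc : ∀ n, ∃ q, q ∈ T l ∧ PathFrom M w T l q n := by
    intro n
    obtain ⟨q, hq, hp⟩ := pathFrom_exists hne hpred n l
    exact ⟨q, hq, hp⟩
  choose c hcT hcP using hc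
  obtain ⟨q, hq⟩ := Finite.exists_infinite_fiber c
  rw [Set.infinite_coe_iff] at hq
  refine ⟨q, fun n => ?_⟩
  obtain ⟨m, hm, hnm⟩ := hq.exists_gt n
  have : c m = q := hm
  rw [← this]
  exact pathFrom_mono (by omega) (hcP m)

lemma good_step [Finite Q] {T : ℕ → Set Q} {l : ℕ} {q : Q}
    (hg : ∀ n, PathFrom M w T l q n) :
    ∃ q', q' ∈ M.δ q (w l) ∧ ∀ n, PathFrom M w T (l + 1) q' n := by
  have hc : ∀ n, ∃ q', q' ∈ M.δ q (w l) ∧ PathFrom M w T (l + 1) q' n := by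
    intro n
    obtain ⟨f, hf0, hfT, hfδ⟩ := hg (n + 1)
    refine ⟨f 1, ?_, fun i => f (i + 1), rfl, ?_, ?_⟩
    · have := hfδ 0 (by omega)
      rw [hf0] at this
      simpa using this
    · intro i hi
      have he : (l + 1) + i = l + (i + 1) := by omega
      rw [he]
      exact hfT (i + 1) (by omega)
    · intro i hi
      have he : (l + 1) + i = l + (i + 1) := by omega
      rw [he]
      exact hfδ (i + 1) (by omega)
  choose c hcδ hcP using hc
  obtain ⟨q', hq'⟩ := Finite.exists_infinite_fiber c
  rw [Set.infinite_coe_iff] at hq'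
  obtain ⟨m0, hm0, _⟩ := hq'.exists_gt 0
  have hm0' : c m0 = q' := hm0
  refine ⟨q', by rw [← hm0']; exact hcδ m0, fun n => ?_⟩
  obtain ⟨m, hm, hnm⟩ := hq'.exists_gt n
  have : c m = q' := hm
  rw [← this]
  exact pathFrom_mono (by omega) (hcP m)

lemma accepts_of_accBranch [Finite Q] {g : ℕ → ℕ}
    (hg : M.IsSliceBranch w g) (hacc : ∀ n, ∃ m ≥ n, M.sliceSet w m (g m) ⊆ M.F) :
    M.Accepts w := by
  set T : ℕ → Set Q := fun l => M.sliceSet w l (g l) with hT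
  have hne : ∀ l, (T l).Nonempty := fun l =>
    Set.nonempty_iff_ne_empty.mpr (hg.1 l)
  have hpred : ∀ l q, q ∈ T (l + 1) → ∃ q' ∈ T l, q ∈ M.δ q' (w l) := by
    intro l q hq
    have h1 : q ∈ M.δset (M.sliceSet w l (g (l + 1) / 2)) (w l) :=
      (slice_subset_SP l (g (l + 1))).trans (SP_subset l (g (l + 1))) hq
    rw [hg.2 l] at h1
    rw [mem_δset] at h1
    exact h1
  obtain ⟨ρ, hP, hR⟩ := exists_chain (fun n q => ∀ m, PathFrom M w T n q m)
    (fun n q q' => q' ∈ M.δ q (w n))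
    (exists_good hne hpred 0)
    (fun n q hq => by
      obtain ⟨q', h1, h2⟩ := good_step hq
      exact ⟨q', h1, h2⟩)
  have hmem : ∀ n, ρ n ∈ T n := by
    intro n
    obtain ⟨f, hf0, hfT, _⟩ := hP n 0
    have := hfT 0 (le_refl 0)
    rw [hf0] at this
    simpa using this
  refine ⟨ρ, ⟨⟨level0_sub_I (g 0) (hmem 0), hR⟩, fun n => ?_⟩⟩
  obtain ⟨m, hm, hsub⟩ := hacc n
  exact ⟨m, hm, hsub (hmem m)⟩

end SliceAux3
section SliceAux4

open NBW Set

variable {M : NBW Q A} {w : ℕ → A}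

lemma accBranch_of_accepts (hacc : M.Accepts w) :
    ∃ g, M.IsSliceBranch w g ∧ ∀ n, ∃ m ≥ n, M.sliceSet w m (g m) ⊆ M.F := by
  obtain ⟨ρ, hrun, hinf⟩ := hacc
  have hV : ∀ l, ρ l ∈ M.V w l := mem_V_of_run hrun
  -- the position of the run at each level
  have hup : ∀ l, ∃ p, ρ l ∈ M.sliceSet w l p ∧ ∀ p', ρ l ∈ M.sliceSet w l p' → p' = p :=
    fun l => (exists_unique_pos (hV l)).exists.imp (fun p hp =>
      ⟨hp, fun p' hp' => (exists_unique_pos (hV l)).unique hp' hp⟩)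
  choose pos hpos hposu using hup
  -- the position at least doubles at each step
  have hstep : ∀ l, 2 * pos l ≤ pos (l + 1) := by
    intro l
    have hδ : ρ (l + 1) ∈ M.δset (M.sliceSet w l (pos l)) (w l) :=
      mem_δset.mpr ⟨ρ l, hpos l, hrun.2 l⟩
    set q₀ : ℕ := if ρ (l + 1) ∈ M.F then 2 * pos l + 1 else 2 * pos l with hq₀def
    have hq₀ : ρ (l + 1) ∈ SP M w l q₀ := by
      unfold SP
      by_cases hF : ρ (l + 1) ∈ M.F
      · rw [hq₀def, if_pos hF, if_neg (by omega)]
        have h2 : (2 * pos l + 1) / 2 = pos l := by omega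
        rw [h2]; exact ⟨hδ, hF⟩
      · rw [hq₀def, if_neg hF, if_pos (by omega)]
        have h2 : (2 * pos l) / 2 = pos l := by omega
        rw [h2]; exact ⟨hδ, hF⟩
    have hmem := hpos (l + 1)
    rw [sliceSet_succ] at hmem
    have hle : q₀ ≤ pos (l + 1) := by
      by_contra hc
      exact hmem.2 (Set.mem_biUnion (by omega : pos (l+1) < q₀) hq₀)
    have : 2 * pos l ≤ q₀ := by rw [hq₀def]; split <;> omega
    omega
  -- ancestors of the run positions
  set π : ℕ → ℕ → ℕ := fun l k => pos l / 2 ^ (l - k) with hπdef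
  have hπself : ∀ l, π l l = pos l := by
    intro l; simp [hπdef]
  have hdivstep : ∀ l k, k + 1 ≤ l → π l (k + 1) / 2 = π l k := by
    intro l k hkl
    show pos l / 2 ^ (l - (k + 1)) / 2 = pos l / 2 ^ (l - k)
    rw [Nat.div_div_eq_div_mul, ← pow_succ]
    have he : l - (k + 1) + 1 = l - k := by omega
    rw [he]
  have hπmono1 : ∀ k l, k ≤ l → π l k ≤ π (l + 1) k := by
    intro k l hkl
    have h1 : pos l ≤ pos (l + 1) / 2 := by
      rw [Nat.le_div_iff_mul_le (by omega)]
      have := hstep l; omega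
    have h2 : π (l + 1) k = pos (l + 1) / 2 / 2 ^ (l - k) := by
      show pos (l + 1) / 2 ^ (l + 1 - k) = _
      rw [Nat.div_div_eq_div_mul]
      congr 1
      rw [← pow_succ']
      congr 1
      omega
    rw [h2]
    exact Nat.div_le_div_right h1
  have hπmono : ∀ k l l', k ≤ l → l ≤ l' → π l k ≤ π l' k := by
    intro k l l' hkl hll'
    induction l' with
    | zero =>
      have h0 : l = 0 := by omega
      subst h0
      exact le_refl _
    | succ m ih =>
      rcases Nat.lt_or_ge l (m + 1) with h | h
      · exact (ih (by omega)).trans (hπmono1 k m (by omega))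
      · have : l = m + 1 := by omega
        subst this; rfl
  have hπne : ∀ k l, k ≤ l → M.sliceSet w k (π l k) ≠ ∅ := by
    intro k l hkl
    have h1 : M.sliceSet w (k + (l - k)) (pos l) ≠ ∅ := by
      have he : k + (l - k) = l := by omega
      rw [he]
      intro hcon
      have hmem := hpos l
      rw [hcon] at hmem
      simp at hmem
    have := anc_ne (l - k) k h1
    exact this
  have hπbd : ∀ k l, k ≤ l → π l k < 2 ^ (k + 1) := fun k l hkl =>
    slice_pos_lt (hπne k l hkl)
  -- stabilization
  have hstab : ∀ k, ∃ N, k ≤ N ∧ ∀ l, N ≤ l → π l k = π N k := by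
    intro k
    have hmono : Monotone (fun n => π (k + n) k) := by
      apply monotone_nat_of_le_succ
      intro n
      have : k + n + 1 = k + (n + 1) := by omega
      rw [← this]
      exact hπmono1 k (k + n) (by omega)
    obtain ⟨N, hN⟩ := mono_bdd_ev_const _ hmono (2 ^ (k + 1)) (fun n => le_of_lt (hπbd k (k + n) (by omega)))
    refine ⟨k + N, by omega, fun l hl => ?_⟩
    have := hN (l - k) (by omega)
    have he : k + (l - k) = l := by omega
    rw [he] at this
    exact this
  choose T hTk hTstab using hstab
  set g : ℕ → ℕ := fun k => π (T k) k with hgdef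
  have hgval : ∀ k l, T k ≤ l → π l k = g k := fun k l hl => hTstab k l hl
  have hgne : ∀ k, M.sliceSet w k (g k) ≠ ∅ := fun k => hπne k (T k) (hTk k)
  have hgdiv : ∀ k, g (k + 1) / 2 = g k := by
    intro k
    set L := max (T k) (T (k + 1)) with hL
    have h1 : π L (k + 1) = g (k + 1) := hgval (k + 1) L (le_max_right _ _)
    have h2 : π L k = g k := hgval k L (le_max_left _ _)
    have h3 := hdivstep L k (le_trans (hTk (k + 1)) (le_max_right _ _))
    rw [h1, h2] at h3
    exact h3
  refine ⟨g, ⟨hgne, hgdiv⟩, ?_⟩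
  -- acceptance of the branch
  by_contra hc
  push_neg at hc
  obtain ⟨K, hK⟩ := hc
  have heven : ∀ m, K ≤ m → g m % 2 = 0 := by
    intro m hm
    rcases Nat.even_or_odd (g m) with h | h
    · exact Nat.even_iff.mp h
    · exact (hK m hm (odd_subset_F (Nat.odd_iff.mp h))).elim
  set L := T K with hLdef
  have claim : ∀ k, K ≤ k → ∀ l, L ≤ l → k ≤ l → π l k = g k := by
    intro k hk
    induction k, hk using Nat.le_induction with
    | base => intro l hLl hkl; exact hgval K l hLl
    | succ k hk ih =>
      intro l hLl hkl
      have h1 : π l (k + 1) / 2 = g k := by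
        rw [hdivstep l k hkl]
        exact ih l hLl (by omega)
      have h2 : g (k + 1) = 2 * g k := by
        have ha := hgdiv k
        have hb := heven (k + 1) (by omega)
        omega
      have h3 : π l (k + 1) ≤ g (k + 1) := by
        set L' := max l (T (k + 1)) with hL'
        calc π l (k + 1) ≤ π L' (k + 1) := hπmono (k + 1) l L' hkl (le_max_left _ _)
          _ = g (k + 1) := hgval (k + 1) L' (le_max_right _ _)
      omega
  obtain ⟨m, hm, hmF⟩ := hinf (max L K)
  have h1 : π m m = g m := claim m (by omega) m (by omega) (le_refl m)
  rw [hπself] at h1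
  have h2 := heven m (by omega)
  exact even_disjoint_F h2 (h1 ▸ hpos m) hmF

end SliceAux4
section SliceAux5

open NBW Set

variable {M : NBW Q A} {w : ℕ → A}

lemma branches_differ {g g' : ℕ → ℕ} (hg : M.IsSliceBranch w g)
    (hg' : M.IsSliceBranch w g') (hne : g ≠ g') :
    ∃ L, ∀ l, L ≤ l → g l ≠ g' l := by
  have h0 : ∃ l, g l ≠ g' l := by
    by_contra hc
    push_neg at hc
    exact hne (funext hc)
  obtain ⟨l0, hl0⟩ := h0
  refine ⟨l0, fun l hl => ?_⟩
  induction l with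
  | zero =>
    have : l0 = 0 := by omega
    subst this; exact hl0
  | succ m ih =>
    rcases Nat.lt_or_ge m l0 with h | h
    · have : l0 = m + 1 := by omega
      subst this; exact hl0
    · intro hc
      apply ih h
      rw [← hg.2 m, ← hg'.2 m, hc]

lemma branch_finset_card [Fintype Q] (t : Finset (ℕ → ℕ))
    (ht : ∀ g ∈ t, M.IsSliceBranch w g) : t.card ≤ Fintype.card Q := by
  rcases isEmpty_or_nonempty Q with hQ | hQ
  · -- no branches when Q is empty
    have : t = ∅ := by
      rw [Finset.eq_empty_iff_forall_notMem]
      intro g hgmem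
      have h1 := (ht g hgmem).1 0
      apply h1
      ext x
      exact (hQ.false x).elim
    simp [this]
  · -- choose a separating level
    set D : (ℕ → ℕ) → (ℕ → ℕ) → ℕ := fun g g' =>
      if h : M.IsSliceBranch w g ∧ M.IsSliceBranch w g' ∧ g ≠ g' then
        (branches_differ h.1 h.2.1 h.2.2).choose else 0 with hD
    set L : ℕ := (t ×ˢ t).sup (fun p => D p.1 p.2) with hL
    have hsep : ∀ g ∈ t, ∀ g' ∈ t, g ≠ g' → g L ≠ g' L := by
      intro g hgm g' hg'm hne
      have hcond : M.IsSliceBranch w g ∧ M.IsSliceBranch w g' ∧ g ≠ g' :=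
        ⟨ht g hgm, ht g' hg'm, hne⟩
      have hDle : D g g' ≤ L :=
        Finset.le_sup (f := fun p => D p.1 p.2) (Finset.mk_mem_product hgm hg'm)
      have hspec := (branches_differ hcond.1 hcond.2.1 hcond.2.2).choose_spec
      have : D g g' = (branches_differ hcond.1 hcond.2.1 hcond.2.2).choose := by
        rw [hD]; simp only [dif_pos hcond]
      exact hspec L (by omega)
    -- injective map into Q
    have : Inhabited Q := Classical.inhabited_of_nonempty hQ
    set f : (ℕ → ℕ) → Q := fun g =>
      if h : (M.sliceSet w L (g L)).Nonempty then h.choose else default with hf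
    have hmemf : ∀ g ∈ t, f g ∈ M.sliceSet w L (g L) := by
      intro g hgm
      have hne : (M.sliceSet w L (g L)).Nonempty :=
        Set.nonempty_iff_ne_empty.mpr ((ht g hgm).1 L)
      rw [hf]
      simp only [dif_pos hne]
      exact hne.choose_spec
    have hinj : Set.InjOn f ↑t := by
      intro g hgm g' hg'm hfeq
      by_contra hne
      have h1 := hmemf g (by simpa using hgm)
      have h2 := hmemf g' (by simpa using hg'm)
      rw [hfeq] at h1
      have hLne := hsep g (by simpa using hgm) g' (by simpa using hg'm) hne
      exact Set.disjoint_left.mp (slice_disjoint L hLne) h1 h2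
    calc t.card ≤ Finset.univ.card :=
          Finset.card_le_card_of_injOn f (fun g _ => Finset.mem_univ _) hinj
      _ = Fintype.card Q := rfl

lemma branch_set_finite [Fintype Q] : {g : ℕ → ℕ | M.IsSliceBranch w g}.Finite := by
  by_contra hc
  obtain ⟨t, hts, htc⟩ := Set.Infinite.exists_subset_card_eq hc (Fintype.card Q + 1)
  have := branch_finset_card t (fun g hg => hts hg)
  omega

lemma branch_set_ncard [Fintype Q] :
    {g : ℕ → ℕ | M.IsSliceBranch w g}.ncard ≤ Fintype.card Q := by
  have hfin := branch_set_finite (M := M) (w := w)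
  rw [Set.ncard_eq_toFinset_card _ hfin]
  exact branch_finset_card _ (fun g hg => (Set.Finite.mem_toFinset hfin).mp hg)

lemma branch_tail {g : ℕ → ℕ} (hg : M.IsSliceBranch w g) (l : ℕ) :
    M.SliceBranchFrom w l (g l) :=
  ⟨fun i => g (l + i), rfl, fun i => hg.1 (l + i), fun i => hg.2 (l + i)⟩

lemma branch_extend {l p : ℕ} (hne : M.sliceSet w l p ≠ ∅)
    (hbf : M.SliceBranchFrom w l p) :
    ∃ g, M.IsSliceBranch w g ∧ g l = p := by
  obtain ⟨b, hb0, hbne, hbdiv⟩ := hbf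
  set g : ℕ → ℕ := fun i => if i ≤ l then p / 2 ^ (l - i) else b (i - l) with hg
  have hgl : g l = p := by
    rw [hg]
    simp
  refine ⟨g, ⟨?_, ?_⟩, hgl⟩
  · intro i
    rw [hg]
    dsimp only
    split
    · rename_i hi
      have h1 : M.sliceSet w (i + (l - i)) p ≠ ∅ := by
        have he : i + (l - i) = l := by omega
        rw [he]; exact hne
      exact anc_ne (l - i) i h1
    · rename_i hi
      have h2 := hbne (i - l)
      have he : l + (i - l) = i := by omega
      rwa [he] at h2
  · intro i
    rw [hg]
    dsimp only
    rcases Nat.lt_or_ge i l with hi | hi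
    · rw [if_pos (by omega : i + 1 ≤ l), if_pos (by omega : i ≤ l)]
      rw [Nat.div_div_eq_div_mul, ← pow_succ]
      have he : l - (i + 1) + 1 = l - i := by omega
      rw [he]
    · rcases Nat.eq_or_lt_of_le hi with hil | hil
      · rw [if_neg (by omega : ¬ (i + 1 ≤ l)), if_pos (by omega : i ≤ l)]
        have h1 : i + 1 - l = 1 := by omega
        have h2 : l - i = 0 := by omega
        rw [h1, h2]
        have h3 := hbdiv 0
        rw [hb0] at h3
        simpa using h3
      · rw [if_neg (by omega), if_neg (by omega)]
        have h1 : i + 1 - l = (i - l) + 1 := by omega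
        rw [h1]
        exact hbdiv (i - l)

end SliceAux5
/-- the slice-based construction yields a co-deterministic DAG
`G^s_{w,M}` whose levels consist of pairwise disjoint sets, such that
(1) the number of ω-branches of `G^s_{w,M}` is at most `|Q|`;
(2) `w ∈ L(M)` iff `G^s_{w,M}` has an accepting ω-branch (visiting `F`-vertices,
i.e. positions whose set is contained in `F`, infinitely often);
(3) `w ∉ L(M)` iff there is a stable level `l ≥ 1` after which every `F`-vertex of
`G^s_{w,M}` is finite. -/
theorem slice_dag_properties
    [Fintype Q] (M : NBW Q A) (w : ℕ → A) :
    (∀ (l p p' : ℕ), p ≠ p' → Disjoint (M.sliceSet w l p) (M.sliceSet w l p')) ∧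
    ({g : ℕ → ℕ | M.IsSliceBranch w g}.Finite ∧
      {g : ℕ → ℕ | M.IsSliceBranch w g}.ncard ≤ Fintype.card Q) ∧
    (M.Accepts w ↔
      ∃ g, M.IsSliceBranch w g ∧ ∀ n, ∃ m ≥ n, M.sliceSet w m (g m) ⊆ M.F) ∧
    (¬ M.Accepts w ↔
      ∃ l ≥ 1, ∀ l' ≥ l, ∀ p : ℕ, M.sliceSet w l' p ≠ ∅ →
        M.sliceSet w l' p ⊆ M.F → ¬ M.SliceBranchFrom w l' p) := by
  have hfin : {g : ℕ → ℕ | M.IsSliceBranch w g}.Finite := branch_set_finite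
  refine ⟨fun l p p' h => slice_disjoint l h, ⟨hfin, branch_set_ncard⟩, ?_, ?_⟩
  · constructor
    · exact accBranch_of_accepts
    · rintro ⟨g, hg, hacc⟩
      exact accepts_of_accBranch hg hacc
  · constructor
    · intro hna
      by_contra hcon
      push_neg at hcon
      have hsel : ∀ n : ℕ, ∃ gb : ℕ → ℕ, M.IsSliceBranch w gb ∧
          ∃ m, m ≥ n ∧ M.sliceSet w m (gb m) ⊆ M.F := by
        intro n
        obtain ⟨l', hl', p, hne, hsub, hbf⟩ := hcon (n + 1) (by omega)
        obtain ⟨gb, hgb, hgl⟩ := branch_extend (Set.nonempty_iff_ne_empty.mp hne) hbf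
        exact ⟨gb, hgb, l', by omega, by rwa [hgl]⟩
      choose gb hgb hsel2 using hsel
      have hFB : Finite ↥{g : ℕ → ℕ | M.IsSliceBranch w g} := hfin.to_subtype
      obtain ⟨b, hb⟩ := Finite.exists_infinite_fiber
        (fun n => (⟨gb n, hgb n⟩ : {g : ℕ → ℕ | M.IsSliceBranch w g}))
      rw [Set.infinite_coe_iff] at hb
      apply hna
      apply accepts_of_accBranch b.2
      intro n
      obtain ⟨k, hk, hkn⟩ := hb.exists_gt n
      have hbk : gb k = b.1 := congrArg Subtype.val hk
      obtain ⟨m, hm, hsub⟩ := hsel2 k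
      exact ⟨m, by omega, by rwa [hbk] at hsub⟩
    · rintro ⟨l, hl, H⟩ hacc
      obtain ⟨g, hg, hAcc⟩ := accBranch_of_accepts hacc
      obtain ⟨m, hm, hsub⟩ := hAcc l
      exact H m hm (g m) (hg.1 m) hsub (branch_tail hg m)
end
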